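/- Log-concavity of ballot numbers (Example 4.6): define, for integers n ≥ 0 and k with n/2 ≤ k ≤ n, the ballot number B(k, n−k) = ((2k − n + 1)/(k + 1)) · C(n,k) as a rational number. Then for all k with n/2 ≤ k − 1 and k + 1 ≤ n, one has B(k, n−k)² ≥ B(k+1, n−k−1) · B(k−1, n−k+1), i.e. ((2k−n+1)·C(n,k)/(k+1))² ≥ ((2k−n+3)·C(n,k+1)/(k+2)) · ((2k−n−1)·C(n,k−1)/k). -/

import Mathlib

set_option maxHeartbeats 1000000 in
/-- Example 4.6: log-concavity of ballot numbers
`B(k, n-k) = ((2k - n + 1)/(k + 1)) C(n,k)`, as rational numbers. -/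
theorem ballot_log_concave (n k : ℕ)
    (hk1 : (n : ℚ) / 2 ≤ (k : ℚ) - 1) (hk2 : k + 1 ≤ n) :
    ((2 * (k : ℚ) - n + 3) * (n.choose (k + 1)) / ((k : ℚ) + 2)) *
        ((2 * (k : ℚ) - n - 1) * (n.choose (k - 1)) / (k : ℚ)) ≤
      ((2 * (k : ℚ) - n + 1) * (n.choose k) / ((k : ℚ) + 1)) ^ 2 := by
  have hn2 : n + 2 ≤ 2 * k := by
    have : (n : ℚ) + 2 ≤ 2 * k := by linarith
    exact_mod_cast this
  have hk3 : 3 ≤ k := by omega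
  have hkn : k ≤ n := by omega
  have h1 := Nat.choose_succ_right_eq n k
  have h2 := Nat.choose_succ_right_eq n (k - 1)
  rw [show k - 1 + 1 = k by omega] at h2
  have e1 : (n.choose (k + 1) : ℚ) * (k + 1) = n.choose k * ((n : ℚ) - k) := by
    have := congrArg (fun x : ℕ => (x : ℚ)) h1
    push_cast [Nat.cast_sub hkn] at this
    linarith
  have e2 : (n.choose k : ℚ) * k = n.choose (k - 1) * ((n : ℚ) - k + 1) := by
    have := congrArg (fun x : ℕ => (x : ℚ)) h2
    have hsub : ((n - (k - 1) : ℕ) : ℚ) = (n : ℚ) - k + 1 := by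
      have : n - (k - 1) = n - k + 1 := by omega
      rw [this]
      push_cast [Nat.cast_sub hkn]
      ring
    push_cast [hsub] at this
    linarith
  have hc : 0 < (n.choose k : ℚ) := by
    exact_mod_cast Nat.choose_pos hkn
  have hkQ : (3 : ℚ) ≤ k := by exact_mod_cast hk3
  have hnQ : (k : ℚ) + 1 ≤ n := by exact_mod_cast hk2
  have hnaQ : (n : ℚ) + 2 ≤ 2 * k := by exact_mod_cast hn2
  have hck1 : (n.choose (k + 1) : ℚ) = n.choose k * ((n : ℚ) - k) / (k + 1) := by
    field_simp
    linarith [e1]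
  have hckm : (n.choose (k - 1) : ℚ) = n.choose k * k / ((n : ℚ) - k + 1) := by
    rw [eq_div_iff (by linarith)]
    linarith [e2]
  rw [hck1, hckm]
  have hkpos : (0:ℚ) < k := by linarith
  have hnk : (0:ℚ) < (n:ℚ) - k + 1 := by linarith
  have h1ne : ((k:ℚ) + 1) ≠ 0 := by positivity
  have h2ne : ((k:ℚ) + 2) ≠ 0 := by positivity
  have hkne : (k:ℚ) ≠ 0 := ne_of_gt hkpos
  have hnkne : ((n:ℚ) - k + 1) ≠ 0 := ne_of_gt hnk
  field_simp
  have hu : (0:ℚ) ≤ 2 * k - n - 2 := by linarith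
  have hv : (0:ℚ) ≤ (n:ℚ) - k - 1 := by linarith
  have key : (2 * (k:ℚ) - n + 3) * (2 * k - n - 1) * ((n:ℚ) - k) * (k + 1) ≤
      (2 * (k:ℚ) - n + 1) ^ 2 * (k + 2) * ((n:ℚ) - k + 1) := by
    nlinarith [mul_nonneg hu hv, mul_nonneg (mul_nonneg hu hu) hv,
      mul_nonneg (mul_nonneg hu hu) hu, mul_nonneg hu hu, mul_nonneg hv hv]
  have factor : (0:ℚ) < (n.choose k : ℚ) ^ 2 * k * (k + 1) := by positivity
  nlinarith [mul_le_mul_of_nonneg_left key (le_of_lt factor)]
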